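/- For every positive integer k and every complex number q with |q| < 1 (with the relevant denominators nonzero), the rational function Wbar_k defined by Wbar_1(q) = q/(1+q^2) and Wbar_k(q) = ((q^{2k-1} - q) Wbar_{k-1}(q) + q^{2k-1}) / (1+q^{2k}) for k > 1 admits the closed form: Wbar_k(q) = q^{2k-1}/(1+q^{2k}) + q^{2k-2} ((q^2;q^2)_{k-1} / (-q^2;q^2)_k) · sum over j from 0 to k−2 of ((-1)^{j+1} / q^j) · (-q^2;q^2)_{k-j-2} / (q^2;q^2)_{k-j-2}. -/

import Mathlib

open scoped BigOperators

/-- The finite q-Pochhammer symbol `(a; q)_N = ∏_{j=0}^{N-1} (1 - a q^j)`. -/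
noncomputable def qPoch (a q : ℂ) (N : ℕ) : ℂ := ∏ j ∈ Finset.range N, (1 - a * q ^ j)

/-- The infinite q-Pochhammer symbol `(a; q)_∞ = ∏_{j=0}^{∞} (1 - a q^j)`. -/
noncomputable def qPochInf (a q : ℂ) : ℂ := ∏' j : ℕ, (1 - a * q ^ j)

/-- An overpartition of `n`: a multiset of positive non-overlined parts together with a
finset of positive overlined parts (the overlined parts are distinct), with total sum `n`. -/
structure Overpartition (n : ℕ) where
  parts : Multiset ℕ
  overlined : Finset ℕ
  parts_pos : ∀ x ∈ parts, 0 < x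
  overlined_pos : ∀ x ∈ overlined, 0 < x
  sum_eq : parts.sum + ∑ x ∈ overlined, x = n

/-- `s` is the smallest non-overlined part of `π`, it appears exactly `k` times among the
non-overlined parts, and every overlined part is greater than `s`. -/
def SptbarCond (k : ℕ) {n : ℕ} (π : Overpartition n) (s : ℕ) : Prop :=
  s ∈ π.parts ∧ (∀ x ∈ π.parts, s ≤ x) ∧ π.parts.count s = k ∧ ∀ x ∈ π.overlined, s < x

/-- `SptbarCond` together with: every part other than `s` is incongruent to `s` modulo 2. -/
def SptbarOCond (k : ℕ) {n : ℕ} (π : Overpartition n) (s : ℕ) : Prop :=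
  SptbarCond k π s ∧ (∀ x ∈ π.parts, x ≠ s → x % 2 ≠ s % 2) ∧
    ∀ x ∈ π.overlined, x % 2 ≠ s % 2

/-- The number of parts of `π` that are greater than `s`. -/
def numGreater {n : ℕ} (π : Overpartition n) (s : ℕ) : ℕ :=
  (π.parts.filter (fun x => s < x)).card + π.overlined.card

/-- The total number of parts of the overpartition `π`. -/
def numParts {n : ℕ} (π : Overpartition n) : ℕ :=
  π.parts.card + π.overlined.card

/-- `sptbar k n`: the number of overpartitions of `n` whose smallest non-overlined part `s`
appears exactly `k` times and all of whose overlined parts are greater than `s`. -/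
noncomputable def sptbar (k n : ℕ) : ℕ :=
  Nat.card {π : Overpartition n // ∃ s, SptbarCond k π s}

/-- `sptbar' k n = a_e(k,n) - a_o(k,n)`. -/
noncomputable def sptbar' (k n : ℕ) : ℤ :=
  (Nat.card {π : Overpartition n // ∃ s, SptbarCond k π s ∧ Even (numGreater π s)} : ℤ) -
    (Nat.card {π : Overpartition n // ∃ s, SptbarCond k π s ∧ Odd (numGreater π s)} : ℤ)

/-- `sptbarO k n`: as `sptbar k n`, with all parts other than the smallest non-overlined part
incongruent to it modulo 2. -/
noncomputable def sptbarO (k n : ℕ) : ℕ :=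
  Nat.card {π : Overpartition n // ∃ s, SptbarOCond k π s}

/-- `sptbarO' k n = b_e(k,n) - b_o(k,n)`. -/
noncomputable def sptbarO' (k n : ℕ) : ℤ :=
  (Nat.card {π : Overpartition n // ∃ s, SptbarOCond k π s ∧ Even (numGreater π s)} : ℤ) -
    (Nat.card {π : Overpartition n // ∃ s, SptbarOCond k π s ∧ Odd (numGreater π s)} : ℤ)

/-- The number of overpartitions of `n` into even parts. -/
noncomputable def pbarE (n : ℕ) : ℕ :=
  Nat.card {π : Overpartition n // (∀ x ∈ π.parts, Even x) ∧ ∀ x ∈ π.overlined, Even x}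

/-- The number of overpartitions of `n` into odd parts with no non-overlined part equal to 1. -/
noncomputable def pbarOex (n : ℕ) : ℕ :=
  Nat.card {π : Overpartition n //
    (∀ x ∈ π.parts, Odd x) ∧ (∀ x ∈ π.overlined, Odd x) ∧ (1 : ℕ) ∉ π.parts}

/-- Among overpartitions of `n` into odd parts with no non-overlined 1's: the number of those
with an even number of parts minus the number of those with an odd number of parts. -/
noncomputable def pbarOex' (n : ℕ) : ℤ :=
  (Nat.card {π : Overpartition n // ((∀ x ∈ π.parts, Odd x) ∧ (∀ x ∈ π.overlined, Odd x) ∧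
      (1 : ℕ) ∉ π.parts) ∧ Even (numParts π)} : ℤ) -
    (Nat.card {π : Overpartition n // ((∀ x ∈ π.parts, Odd x) ∧ (∀ x ∈ π.overlined, Odd x) ∧
      (1 : ℕ) ∉ π.parts) ∧ Odd (numParts π)} : ℤ)

/-- `sptkd k n`: the number of partitions of `n` whose smallest part appears exactly `k`
times and all of whose remaining parts are distinct. -/
noncomputable def sptkd (k n : ℕ) : ℕ :=
  Nat.card {m : Multiset ℕ // (∀ x ∈ m, 0 < x) ∧ m.sum = n ∧
    ∃ s, s ∈ m ∧ (∀ x ∈ m, s ≤ x) ∧ m.count s = k ∧ ∀ x ∈ m, x ≠ s → m.count x = 1}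

/-- `Wbar q 1 = q/(1+q^2)` and
`Wbar q k = ((q^(2k-1) - q) * Wbar q (k-1) + q^(2k-1)) / (1 + q^(2k))` for `k > 1`. -/
noncomputable def Wbar (q : ℂ) : ℕ → ℂ
  | 0 => 0
  | 1 => q / (1 + q ^ 2)
  | (k + 2) => ((q ^ (2 * (k + 2) - 1) - q) * Wbar q (k + 1) + q ^ (2 * (k + 2) - 1)) /
      (1 + q ^ (2 * (k + 2)))


lemma qPoch_succ' (a q : ℂ) (n : ℕ) :
    qPoch a q (n + 1) = qPoch a q n * (1 - a * q ^ n) := Finset.prod_range_succ _ _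

lemma abs_term_lt (q : ℂ) (hq : ‖q‖ < 1) (j : ℕ) :
    ‖q ^ 2 * (q ^ 2) ^ j‖ < 1 := by
  have : q ^ 2 * (q ^ 2) ^ j = (q ^ 2) ^ (j + 1) := by ring
  rw [this, norm_pow, norm_pow]
  have h0 : (0 : ℝ) ≤ ‖q‖ := norm_nonneg _
  have h2 : ‖q‖ ^ 2 < 1 := by nlinarith
  exact pow_lt_one₀ (by positivity) h2 (Nat.succ_ne_zero _)

lemma one_sub_ne' (z : ℂ) (h : ‖z‖ < 1) : (1 : ℂ) - z ≠ 0 := by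
  intro h0
  have : z = 1 := by linear_combination -h0
  rw [this] at h; simp at h

lemma one_add_ne' (z : ℂ) (h : ‖z‖ < 1) : (1 : ℂ) + z ≠ 0 := by
  intro h0
  have : z = -1 := by linear_combination h0
  rw [this] at h; simp at h

lemma qPochQ_ne (q : ℂ) (hq : ‖q‖ < 1) (n : ℕ) :
    qPoch (q ^ 2) (q ^ 2) n ≠ 0 := by
  rw [qPoch]
  exact Finset.prod_ne_zero_iff.2 fun j _ => one_sub_ne' _ (abs_term_lt q hq j)

lemma qPochP_ne (q : ℂ) (hq : ‖q‖ < 1) (n : ℕ) :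
    qPoch (-q ^ 2) (q ^ 2) n ≠ 0 := by
  rw [qPoch]
  refine Finset.prod_ne_zero_iff.2 fun j _ => ?_
  have : (1 : ℂ) - -q ^ 2 * (q ^ 2) ^ j = 1 + q ^ 2 * (q ^ 2) ^ j := by ring
  rw [this]
  exact one_add_ne' _ (abs_term_lt q hq j)

lemma one_add_pow_ne (q : ℂ) (hq : ‖q‖ < 1) (n : ℕ) (hn : 1 ≤ n) :
    (1 : ℂ) + q ^ n ≠ 0 := by
  apply one_add_ne'
  rw [norm_pow]
  exact pow_lt_one₀ (norm_nonneg _) hq (by omega)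

lemma step_alg (q t Pm Qm S : ℂ) (hq0 : q ≠ 0) (hPm : Pm ≠ 0) (hQm : Qm ≠ 0)
    (h1p : (1:ℂ) + q^2*t^2 ≠ 0) (h2p : (1:ℂ) + q^4*t^2 ≠ 0) :
    ((q^3*t^2 - q) * (q*t^2/(1+q^2*t^2) + t^2*(Qm/(Pm*(1 - -q^2*t^2)))*S) + q^3*t^2)/(1+q^4*t^2)
    = q^3*t^2/(1+q^4*t^2) + q^2*t^2*(Qm*(1-q^2*t^2)/(Pm*(1 - -q^2*t^2)*(1 - -q^2*(q^2*t^2)))) * (-(Pm/Qm) + -(1/q)*S) := by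
  have e1 : (1:ℂ) - -q^2*t^2 = 1 + q^2*t^2 := by ring
  have e2 : (1:ℂ) - -q^2*(q^2*t^2) = 1 + q^4*t^2 := by ring
  rw [e1, e2]
  have hD : q*Qm*(Pm*((1:ℂ)+q^2*t^2)*(1+q^4*t^2)) ≠ 0 :=
    mul_ne_zero (mul_ne_zero hq0 hQm) (mul_ne_zero (mul_ne_zero hPm h1p) h2p)
  have hL : ((q^3*t^2 - q) * (q*t^2/(1+q^2*t^2) + t^2*(Qm/(Pm*(1 + q^2*t^2)))*S) + q^3*t^2)/(1+q^4*t^2)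
      = (q*Qm*((q^3*t^2 - q)*(q*t^2*Pm + t^2*Qm*S) + q^3*t^2*Pm*(1+q^2*t^2)))
        / (q*Qm*(Pm*((1:ℂ)+q^2*t^2)*(1+q^4*t^2))) := by
    rw [eq_div_iff hD]
    field_simp
  have hg : -(Pm/Qm) + -(1/q)*S = (-(Pm*q) - Qm*S)/(q*Qm) := by
    field_simp
    ring
  have hX : q^2*t^2*(Qm*(1-q^2*t^2)/(Pm*(1 + q^2*t^2)*(1 + q^4*t^2))) * ((-(Pm*q) - Qm*S)/(q*Qm))
      = (q^2*t^2*(Qm*(1-q^2*t^2))*(-(Pm*q) - Qm*S)) / (q*Qm*(Pm*((1:ℂ)+q^2*t^2)*(1+q^4*t^2))) := by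
    rw [mul_assoc, div_mul_div_comm, ← mul_div_assoc]
    congr 1
    · ring
    · ring
  have hY : q^3*t^2/((1:ℂ)+q^4*t^2)
      = (q^3*t^2*(q*Qm*(Pm*(1+q^2*t^2)))) / (q*Qm*(Pm*((1:ℂ)+q^2*t^2)*(1+q^4*t^2))) := by
    rw [div_eq_div_iff h2p hD]
    ring
  rw [hL, hg, hX, hY, ← add_div]
  congr 1
  ring

lemma Wbar_aux (q : ℂ) (hq : ‖q‖ < 1) (hq0 : q ≠ 0) (m : ℕ) :
    Wbar q (m + 1) = q ^ (2 * m + 1) / (1 + q ^ (2 * (m + 1))) +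
      q ^ (2 * m) * (qPoch (q ^ 2) (q ^ 2) m / qPoch (-q ^ 2) (q ^ 2) (m + 1)) *
        ∑ j ∈ Finset.range m, ((-1 : ℂ) ^ (j + 1) / q ^ j) *
          (qPoch (-q ^ 2) (q ^ 2) (m - (j + 1)) / qPoch (q ^ 2) (q ^ 2) (m - (j + 1))) := by
  induction m with
  | zero => norm_num [Wbar]
  | succ m ih =>
    have hQm := qPochQ_ne q hq m
    have hPm := qPochP_ne q hq m
    have hPm1 := qPochP_ne q hq (m + 1)
    have hd1 : (1 : ℂ) + q ^ (2 * (m + 1)) ≠ 0 := one_add_pow_ne q hq _ (by omega)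
    have hd2 : (1 : ℂ) + q ^ (2 * (m + 2)) ≠ 0 := one_add_pow_ne q hq _ (by omega)
    have hW : Wbar q (m + 2) = ((q ^ (2 * (m + 2) - 1) - q) * Wbar q (m + 1) +
        q ^ (2 * (m + 2) - 1)) / (1 + q ^ (2 * (m + 2))) := rfl
    have hsum : ∑ j ∈ Finset.range (m + 1), ((-1 : ℂ) ^ (j + 1) / q ^ j) *
          (qPoch (-q ^ 2) (q ^ 2) (m + 1 - (j + 1)) / qPoch (q ^ 2) (q ^ 2) (m + 1 - (j + 1)))
        = -(qPoch (-q ^ 2) (q ^ 2) m / qPoch (q ^ 2) (q ^ 2) m) +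
          (-(1 / q)) * ∑ j ∈ Finset.range m, ((-1 : ℂ) ^ (j + 1) / q ^ j) *
          (qPoch (-q ^ 2) (q ^ 2) (m - (j + 1)) / qPoch (q ^ 2) (q ^ 2) (m - (j + 1))) := by
      rw [Finset.sum_range_succ', Finset.mul_sum]
      simp only [Nat.succ_sub_succ, Nat.add_sub_cancel, pow_one, pow_zero, div_one]
      rw [add_comm]
      congr 1
      · norm_num
      · apply Finset.sum_congr rfl
        intro j _
        field_simp
        ring
    have he1 : 2 * (m + 2) - 1 = 2 * m + 3 := by omega
    have he2 : m + 1 - (0 + 1) = m := by omega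
    rw [hW, ih, he1, hsum, qPoch_succ' (q ^ 2) (q ^ 2) m, qPoch_succ' (-q ^ 2) (q ^ 2) (m + 1),
      qPoch_succ' (-q ^ 2) (q ^ 2) m]
    set S := ∑ j ∈ Finset.range m, ((-1 : ℂ) ^ (j + 1) / q ^ j) *
          (qPoch (-q ^ 2) (q ^ 2) (m - (j + 1)) / qPoch (q ^ 2) (q ^ 2) (m - (j + 1))) with hS
    set Qm := qPoch (q ^ 2) (q ^ 2) m with hQ
    set Pm := qPoch (-q ^ 2) (q ^ 2) m with hP
    have hfac1 : (1 : ℂ) - -q ^ 2 * (q ^ 2) ^ m ≠ 0 := by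
      have : (1 : ℂ) - -q ^ 2 * (q ^ 2) ^ m = 1 + q ^ 2 * (q ^ 2) ^ m := by ring
      rw [this]; exact one_add_ne' _ (abs_term_lt q hq m)
    have hfac2 : (1 : ℂ) - -q ^ 2 * (q ^ 2) ^ (m + 1) ≠ 0 := by
      have : (1 : ℂ) - -q ^ 2 * (q ^ 2) ^ (m + 1) = 1 + q ^ 2 * (q ^ 2) ^ (m + 1) := by ring
      rw [this]; exact one_add_ne' _ (abs_term_lt q hq (m + 1))
    have hc1 : q ^ 2 * q ^ (m * 2) * Pm + Pm ≠ 0 := by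
      have h : q ^ 2 * q ^ (m * 2) * Pm + Pm = (1 - -q ^ 2 * (q ^ 2) ^ m) * Pm := by ring
      rw [h]; exact mul_ne_zero hfac1 hPm
    have hc2 : Pm + q ^ 2 * q ^ (m * 2) * Pm ≠ 0 := by
      have h : Pm + q ^ 2 * q ^ (m * 2) * Pm = (1 - -q ^ 2 * (q ^ 2) ^ m) * Pm := by ring
      rw [h]; exact mul_ne_zero hfac1 hPm
    rw [show (q:ℂ)^(2*m+3) = q^3*(q^m)^2 by ring,
      show (q:ℂ)^(2*m+1) = q*(q^m)^2 by ring,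
      show (q:ℂ)^(2*(m+1)+1) = q^3*(q^m)^2 by ring,
      show (q:ℂ)^(2*(m+1+1)) = q^4*(q^m)^2 by ring,
      show (q:ℂ)^(2*(m+1)) = q^2*(q^m)^2 by ring,
      show (q:ℂ)^(2*m) = (q^m)^2 by ring,
      show ((q:ℂ)^2)^(m+1) = q^2*(q^m)^2 by ring,
      show ((q:ℂ)^2)^m = (q^m)^2 by ring]
    have h1p : (1:ℂ) + q^2*(q^m)^2 ≠ 0 := by
      rw [show (q:ℂ)^2*(q^m)^2 = q^(2*(m+1)) by ring]; exact hd1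
    have h2p : (1:ℂ) + q^4*(q^m)^2 ≠ 0 := by
      rw [show (q:ℂ)^4*(q^m)^2 = q^(2*(m+2)) by ring]; exact hd2
    exact step_alg q (q^m) Pm Qm S hq0 hPm hQm h1p h2p

/-- Theorem 2.5 (second part): closed form for `Wbar q k`. -/
theorem Wbar_closed_form (k : ℕ) (hk : 1 ≤ k) (q : ℂ) (hq : ‖q‖ < 1)
    (hq0 : q ≠ 0) :
    Wbar q k = q ^ (2 * k - 1) / (1 + q ^ (2 * k)) +
      q ^ (2 * k - 2) * (qPoch (q ^ 2) (q ^ 2) (k - 1) / qPoch (-q ^ 2) (q ^ 2) k) *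
        ∑ j ∈ Finset.range (k - 1), ((-1 : ℂ) ^ (j + 1) / q ^ j) *
          (qPoch (-q ^ 2) (q ^ 2) (k - j - 2) / qPoch (q ^ 2) (q ^ 2) (k - j - 2)) := by
  obtain ⟨m, rfl⟩ : ∃ m, k = m + 1 := ⟨k - 1, by omega⟩
  rw [Wbar_aux q hq hq0 m]
  have e1 : 2 * (m + 1) - 1 = 2 * m + 1 := by omega
  have e2 : 2 * (m + 1) - 2 = 2 * m := by omega
  have e3 : m + 1 - 1 = m := by omega
  rw [e1, e2, e3]
  congr 1
  congr 1
  apply Finset.sum_congr rfl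
  intro j hj
  have e4 : m + 1 - j - 2 = m - (j + 1) := by omega
  rw [e4]
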